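/- Let G1 and G2 be planar graphs on the same vertex set V, and let S ⊆ V be an unordered free set in both G1 and G2. Then G1 and G2 have an |S|-partial simultaneous geometric embedding with mapping: there exist points p_1,...,p_s and vertices v_1,...,v_s in S such that each of G1, G2 has a straight-line crossing-free drawing with v_i at p_i for all i. -/
import Mathlib


/-- A straight-line crossing-free drawing of a graph: an injective placement of the
vertices in the plane such that no vertex lies in the open segment representing an
edge, and any two distinct edges intersect only in shared endpoints. -/
def IsCFDrawing {V : Type*} (G : SimpleGraph V) (p : V → ℝ × ℝ) : Prop :=
  Function.Injective p ∧
  (∀ u v w : V, G.Adj u v → w ≠ u → w ≠ v → p w ∉ openSegment ℝ (p u) (p v)) ∧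
  (∀ a b c d : V, G.Adj a b → G.Adj c d → ({a, b} : Set V) ≠ ({c, d} : Set V) →
    segment ℝ (p a) (p b) ∩ segment ℝ (p c) (p d) ⊆
      p '' (({a, b} : Set V) ∩ ({c, d} : Set V)))

/-- A graph is planar if it admits a straight-line crossing-free drawing (Fáry). -/
def IsPlanar {V : Type*} (G : SimpleGraph V) : Prop :=
  ∃ p : V → ℝ × ℝ, IsCFDrawing G p

/-- An ordered free set: for all target points with strictly increasing x-coordinates
there is a straight-line crossing-free drawing placing `v i` at `(x i, y i)`. -/
def IsFreeSeq {V : Type*} (G : SimpleGraph V) {s : ℕ} (v : Fin s → V) : Prop :=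
  ∀ x y : Fin s → ℝ, StrictMono x →
    ∃ p : V → ℝ × ℝ, IsCFDrawing G p ∧ ∀ i, p (v i) = (x i, y i)

/-- An unordered free set: some enumeration of `S` is an ordered free set. -/
def IsFreeSet {V : Type*} (G : SimpleGraph V) (S : Finset V) : Prop :=
  ∃ v : Fin S.card → V, Function.Injective v ∧ (∀ i, v i ∈ S) ∧ IsFreeSeq G v

noncomputable def swlin : (ℝ × ℝ) →ᵃ[ℝ] (ℝ × ℝ) := (LinearEquiv.prodComm ℝ ℝ ℝ).toLinearMap.toAffineMap

lemma swap_mem_seg {x a b : ℝ × ℝ} : x.swap ∈ segment ℝ a b ↔ x ∈ segment ℝ a.swap b.swap := by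
  constructor
  · intro h
    have := (image_segment ℝ swlin a b) ▸ Set.mem_image_of_mem swlin h
    simpa [swlin, Prod.swap_injective.eq_iff] using this
  · intro h
    have := (image_segment ℝ swlin a.swap b.swap) ▸ Set.mem_image_of_mem swlin h
    simpa [swlin, Prod.swap_injective.eq_iff] using this

lemma swap_mem_oseg {x a b : ℝ × ℝ} : x.swap ∈ openSegment ℝ a b ↔ x ∈ openSegment ℝ a.swap b.swap := by
  constructor
  · intro h
    have := (image_openSegment ℝ swlin a b) ▸ Set.mem_image_of_mem swlin h
    simpa [swlin, Prod.swap_injective.eq_iff] using this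
  · intro h
    have := (image_openSegment ℝ swlin a.swap b.swap) ▸ Set.mem_image_of_mem swlin h
    simpa [swlin, Prod.swap_injective.eq_iff] using this

lemma IsCFDrawing.swap {V : Type*} {G : SimpleGraph V} {p : V → ℝ × ℝ}
    (h : IsCFDrawing G p) : IsCFDrawing G (Prod.swap ∘ p) := by
  obtain ⟨hinj, hv, he⟩ := h
  refine ⟨Prod.swap_injective.comp hinj, ?_, ?_⟩
  · intro u v w huv hwu hwv hmem
    exact hv u v w huv hwu hwv (by simpa using swap_mem_oseg.2 hmem)
  · intro a b c d hab hcd hne x hx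
    obtain ⟨hx1, hx2⟩ := hx
    have h1 : x.swap ∈ segment ℝ (p a) (p b) := swap_mem_seg.2 hx1
    have h2 : x.swap ∈ segment ℝ (p c) (p d) := swap_mem_seg.2 hx2
    obtain ⟨y, hy, hpy⟩ := he a b c d hab hcd hne ⟨h1, h2⟩
    exact ⟨y, hy, by simp [Function.comp, hpy]⟩

theorem stmt_14 {V : Type*} [Fintype V] (G1 G2 : SimpleGraph V) (S : Finset V)
    (h1 : IsFreeSet G1 S) (h2 : IsFreeSet G2 S) :
    ∃ pt : V → ℝ × ℝ,
      (∃ p1 : V → ℝ × ℝ, IsCFDrawing G1 p1 ∧ ∀ v ∈ S, p1 v = pt v) ∧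
      (∃ p2 : V → ℝ × ℝ, IsCFDrawing G2 p2 ∧ ∀ v ∈ S, p2 v = pt v) := by
  classical
  obtain ⟨v1, hinj1, hmem1, hfree1⟩ := h1
  obtain ⟨v2, hinj2, hmem2, hfree2⟩ := h2
  have hbij1 : Function.Bijective (fun i => (⟨v1 i, hmem1 i⟩ : S)) :=
    (Fintype.bijective_iff_injective_and_card _).2
      ⟨fun i j h => hinj1 (congrArg Subtype.val h), by simp⟩
  have hbij2 : Function.Bijective (fun i => (⟨v2 i, hmem2 i⟩ : S)) :=
    (Fintype.bijective_iff_injective_and_card _).2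
      ⟨fun i j h => hinj2 (congrArg Subtype.val h), by simp⟩
  set e1 := Equiv.ofBijective _ hbij1 with he1
  set e2 := Equiv.ofBijective _ hbij2 with he2
  set pt : V → ℝ × ℝ := fun w =>
    if h : w ∈ S then (((e1.symm ⟨w, h⟩ : Fin S.card) : ℝ), ((e2.symm ⟨w, h⟩ : Fin S.card) : ℝ))
    else (0, 0) with hpt
  have hmono : StrictMono (fun i : Fin S.card => (i : ℝ)) := fun i j h => Nat.cast_lt.2 h
  refine ⟨pt, ?_, ?_⟩
  · obtain ⟨p1, hcf, hp⟩ := hfree1 (fun i => (i : ℝ))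
      (fun i => ((e2.symm ⟨v1 i, hmem1 i⟩ : Fin S.card) : ℝ)) hmono
    refine ⟨p1, hcf, fun w hw => ?_⟩
    set i := e1.symm ⟨w, hw⟩ with hi
    have hv : v1 i = w := congrArg Subtype.val (e1.apply_symm_apply ⟨w, hw⟩)
    have hs : (⟨v1 i, hmem1 i⟩ : S) = ⟨w, hw⟩ := Subtype.ext hv
    calc p1 w = p1 (v1 i) := by rw [hv]
      _ = ((i : ℝ), ((e2.symm ⟨v1 i, hmem1 i⟩ : Fin S.card) : ℝ)) := hp i
      _ = pt w := by rw [hpt]; simp only [hw, dif_pos]; rw [hs]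
  · obtain ⟨q, hcf, hp⟩ := hfree2 (fun j => (j : ℝ))
      (fun j => ((e1.symm ⟨v2 j, hmem2 j⟩ : Fin S.card) : ℝ)) hmono
    refine ⟨Prod.swap ∘ q, hcf.swap, fun w hw => ?_⟩
    set j := e2.symm ⟨w, hw⟩ with hj
    have hv : v2 j = w := congrArg Subtype.val (e2.apply_symm_apply ⟨w, hw⟩)
    have hs : (⟨v2 j, hmem2 j⟩ : S) = ⟨w, hw⟩ := Subtype.ext hv
    calc (Prod.swap ∘ q) w = (q (v2 j)).swap := by rw [hv]; rfl
      _ = (((e1.symm ⟨v2 j, hmem2 j⟩ : Fin S.card) : ℝ), (j : ℝ)) := by rw [hp j]; rfl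
      _ = pt w := by rw [hpt]; simp only [hw, dif_pos]; rw [hs]
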